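/- arXiv:2208.02071 — 5 statements merged into one kernel-verified Lean document; each statement's English description precedes it below -/
import Mathlib

section
/- Let k ≥ 3 and n ≥ 2k+1, and define the antichain A_n = {F_1, ..., F_{⌊n/2⌋−k+1}} in F_{2k}^{[1,n]} where F_i = [i, i+1] ∪ [n−2k+4−i, n−i+1]. Then A_n is indeed an antichain with respect to the componentwise partial order ≤_p on 2k-element subsets of [1,n] (each set written in increasing order). -/
open Finset

/-- `GaleEven k m n F` means `F` is a `2k`-subset of `[m,n]` of the form
`{i₁, i₁+1, i₂, i₂+1, …, i_k, i_k+1}` with `i_{j+1} ≥ i_j + 2` for all `j`,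
`m ≤ i₁`, and `i_k + 1 ≤ n` (a member of the family `F_{2k}^{[m,n]}`). -/
def GaleEven (k m n : ℕ) (F : Finset ℕ) : Prop :=
  ∃ f : Fin k → ℕ,
    (∀ j j' : Fin k, j < j' → f j + 2 ≤ f j') ∧
    (∀ j : Fin k, m ≤ f j ∧ f j + 1 ≤ n) ∧
    F = Finset.univ.biUnion fun j : Fin k => {f j, f j + 1}

/-- The componentwise partial order `≤ₚ`: `F ≤ₚ G` iff, listing both sets in
increasing order, each element of `F` is at most the corresponding element
of `G`. -/
def lep (F G : Finset ℕ) : Prop :=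
  List.Forall₂ (· ≤ ·) (F.sort (· ≤ ·)) (G.sort (· ≤ ·))

/-- The member `F_i = [i, i+1] ∪ [n−2k+4−i, n−i+1]` of the antichain `A_n`. -/
def Fset (k n i : ℕ) : Finset ℕ :=
  Finset.Icc i (i + 1) ∪ Finset.Icc (n - 2 * k + 4 - i) (n - i + 1)

/-- The antichain `A_n = {F_1, …, F_{⌊n/2⌋−k+1}}` (as a predicate). -/
def Aset (k n : ℕ) : Finset ℕ → Prop :=
  fun F => ∃ j, 1 ≤ j ∧ j ≤ n / 2 - k + 1 ∧ F = Fset k n j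

/-- The shifted antichain `A_n − 1_{2k}` : the element coming from `F_j` is
`[j−1, j] ∪ [n−2k+3−j, n−j]`, defined for `j > 1`. -/
def AsetMinus (k n : ℕ) : Finset ℕ → Prop :=
  fun F => ∃ j, 2 ≤ j ∧ j ≤ n / 2 - k + 1 ∧
    F = Finset.Icc (j - 1) j ∪ Finset.Icc (n - 2 * k + 3 - j) (n - j)

/-- Membership in the order ideal of `F_{2k}^{[1,n]}` generated by a
collection `S`. -/
def InIdeal (k n : ℕ) (S : Finset ℕ → Prop) (F : Finset ℕ) : Prop :=
  GaleEven k 1 n F ∧ ∃ G : Finset ℕ, S G ∧ lep F G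

/-- `F` is a facet of the relative squeezed ball `B_{A_n}`: it lies in the order
ideal generated by `A_n` but not in the one generated by `A_n − 1_{2k}`. -/
def IsBAFacet (k n : ℕ) (F : Finset ℕ) : Prop :=
  InIdeal k n (Aset k n) F ∧ ¬ InIdeal k n (AsetMinus k n) F

lemma lep_min'_le {F G : Finset ℕ} (h : lep F G) (hF : F.Nonempty) (hG : G.Nonempty) :
    F.min' hF ≤ G.min' hG := by
  obtain ⟨hlen, hget⟩ := List.forall₂_iff_get.1 h
  rw [Finset.min'_eq_sorted_zero, Finset.min'_eq_sorted_zero]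
  exact hget 0 _ _

lemma lep_max'_le {F G : Finset ℕ} (h : lep F G) (hF : F.Nonempty) (hG : G.Nonempty) :
    F.max' hF ≤ G.max' hG := by
  obtain ⟨hlen, hget⟩ := List.forall₂_iff_get.1 h
  rw [Finset.max'_eq_sorted_last, Finset.max'_eq_sorted_last]
  have := hget ((F.sort (· ≤ ·)).length - 1)
    (Nat.sub_lt (by simpa [Finset.length_sort] using Finset.card_pos.2 hF) one_pos)
    (by rw [← hlen]; exact Nat.sub_lt (by simpa [Finset.length_sort] using Finset.card_pos.2 hF) one_pos)
  simpa [hlen] using this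

lemma Fset_nonempty (k n i : ℕ) : (Fset k n i).Nonempty :=
  ⟨i, Finset.mem_union_left _ (Finset.mem_Icc.2 ⟨le_refl _, Nat.le_succ _⟩)⟩

lemma Fset_min' (k n i : ℕ) (hk : 3 ≤ k) (hn : 2 * k + 1 ≤ n)
    (hi : i ≤ n / 2 - k + 1) : (Fset k n i).min' (Fset_nonempty k n i) = i := by
  apply le_antisymm
  · exact Finset.min'_le _ _ (Finset.mem_union_left _ (Finset.mem_Icc.2 ⟨le_refl _, Nat.le_succ _⟩))
  · apply Finset.le_min'
    intro b hb
    simp only [Fset, Finset.mem_union, Finset.mem_Icc] at hb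
    omega

lemma Fset_max' (k n i : ℕ) (hk : 3 ≤ k) (hn : 2 * k + 1 ≤ n)
    (hi : i ≤ n / 2 - k + 1) : (Fset k n i).max' (Fset_nonempty k n i) = n - i + 1 := by
  apply le_antisymm
  · apply Finset.max'_le
    intro b hb
    simp only [Fset, Finset.mem_union, Finset.mem_Icc] at hb
    omega
  · exact Finset.le_max' _ _ (Finset.mem_union_right _ (Finset.mem_Icc.2 ⟨by omega, le_refl _⟩))

/-- for `k ≥ 3` and `n ≥ 2k+1`, the collection
`A_n = {F_1, …, F_{⌊n/2⌋−k+1}}` with `F_i = [i,i+1] ∪ [n−2k+4−i, n−i+1]` is an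
antichain for the componentwise order `≤ₚ`. -/
theorem stmt10 (k n : ℕ) (hk : 3 ≤ k) (hn : 2 * k + 1 ≤ n) :
    ∀ i j : ℕ, 1 ≤ i → i ≤ n / 2 - k + 1 → 1 ≤ j → j ≤ n / 2 - k + 1 →
      i ≠ j → ¬ lep (Fset k n i) (Fset k n j) := by
  intro i j hi1 hi2 hj1 hj2 hne hlep
  rcases lt_or_gt_of_ne hne with hij | hij
  · have h := lep_max'_le hlep (Fset_nonempty k n i) (Fset_nonempty k n j)
    rw [Fset_max' k n i hk hn hi2, Fset_max' k n j hk hn hj2] at h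
    omega
  · have h := lep_min'_le hlep (Fset_nonempty k n i) (Fset_nonempty k n j)
    rw [Fset_min' k n i hk hn hi2, Fset_min' k n j hk hn hj2] at h
    omega
end

section
/- Let k ≥ 3, n ≥ 2k+1, and let A = A_n be the antichain with F_i = [i,i+1] ∪ [n−2k+4−i, n−i+1] for 1 ≤ i ≤ ⌊n/2⌋−k+1. For fixed i in this range, a set of the form [i, i+1] ∪ G belongs to the order ideal of F_{2k}^{[1,n]} generated by A but not to the order ideal generated by A − 1_{2k} if and only if G = H ∪ [n−i, n−i+1] with H ∈ F_{2k−4}^{[i+2, n−i−1]}, or G = H ∪ [n−i−1, n−i] with H ∈ F_{2k−4}^{[i+2, n−i−2]}. -/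
open Finset

/-- sorted list of a pair-union set -/
def pairList : ∀ {k : ℕ}, (Fin k → ℕ) → List ℕ
  | 0, _ => []
  | _ + 1, f => f 0 :: (f 0 + 1) :: pairList (f ∘ Fin.succ)

def pairSet {k : ℕ} (f : Fin k → ℕ) : Finset ℕ :=
  Finset.univ.biUnion fun j : Fin k => {f j, f j + 1}

lemma mem_pairSet {k : ℕ} {f : Fin k → ℕ} {x : ℕ} :
    x ∈ pairSet f ↔ ∃ j, x = f j ∨ x = f j + 1 := by
  simp [pairSet, Finset.mem_biUnion]

lemma pairSet_succ {k : ℕ} (f : Fin (k + 1) → ℕ) :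
    pairSet f = {f 0, f 0 + 1} ∪ pairSet (f ∘ Fin.succ) := by
  ext x
  simp only [mem_pairSet, Finset.mem_union, Finset.mem_insert, Finset.mem_singleton,
    Fin.exists_fin_succ, Function.comp_apply]

lemma toFinset_pairList {k : ℕ} (f : Fin k → ℕ) :
    (pairList f).toFinset = pairSet f := by
  induction k with
  | zero => ext x; simp [pairList, mem_pairSet]
  | succ k ih =>
      rw [pairSet_succ]
      simp only [pairList, List.toFinset_cons, ih]
      ext x
      simp only [Finset.mem_insert, Finset.mem_union, Finset.mem_singleton]
      tauto

lemma sorted_pairList {k : ℕ} {f : Fin k → ℕ}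
    (hf : ∀ j j' : Fin k, j < j' → f j + 2 ≤ f j') :
    (pairList f).Pairwise (· < ·) := by
  induction k with
  | zero => simp [pairList]
  | succ k ih =>
      have hmem : ∀ x ∈ pairList (f ∘ Fin.succ), f 0 + 2 ≤ x := by
        intro x hx
        rw [← List.mem_toFinset, toFinset_pairList, mem_pairSet] at hx
        obtain ⟨j, hj | hj⟩ := hx <;>
          · simp only [Function.comp_apply] at hj
            have := hf 0 j.succ (Fin.succ_pos j)
            omega
      refine List.pairwise_cons.2 ⟨?_, List.pairwise_cons.2 ⟨?_, ?_⟩⟩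
      · intro b hb
        rcases List.mem_cons.1 hb with rfl | hb
        · omega
        · have := hmem b hb; omega
      · intro b hb; have := hmem b hb; omega
      · exact ih fun j j' h => hf j.succ j'.succ (by simpa using h)

lemma sort_pairSet {k : ℕ} {f : Fin k → ℕ}
    (hf : ∀ j j' : Fin k, j < j' → f j + 2 ≤ f j') :
    (pairSet f).sort (· ≤ ·) = pairList f := by
  have hs := sorted_pairList hf
  have hn : (pairList f).Nodup := hs.nodup
  rw [← toFinset_pairList]
  exact (List.toFinset_sort (· ≤ ·) hn).2 (hs.imp le_of_lt)

lemma toFinset_range' (a m : ℕ) : (List.range' a m).toFinset = Finset.Ico a (a + m) := by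
  ext x; simp [List.mem_range'_1, Finset.mem_Ico]

lemma sorted_range' (a m : ℕ) : (List.range' a m).Pairwise (· < ·) := by
  induction m generalizing a with
  | zero => simp
  | succ m ih =>
      rw [List.range'_succ]
      refine List.pairwise_cons.2 ⟨?_, ih (a + 1)⟩
      intro b hb
      rw [List.mem_range'_1] at hb
      omega

lemma sort_icc_union_icc (a c d : ℕ) (h : a + 1 < c) :
    (Finset.Icc a (a + 1) ∪ Finset.Icc c d).sort (· ≤ ·) =
      a :: (a + 1) :: List.range' c (d + 1 - c) := by
  have hs : (a :: (a + 1) :: List.range' c (d + 1 - c)).Pairwise (· < ·) := by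
    refine List.pairwise_cons.2 ⟨?_, List.pairwise_cons.2 ⟨?_, sorted_range' _ _⟩⟩ <;>
      · intro b hb
        first
          | (rcases List.mem_cons.1 hb with rfl | hb;· omega;
             rw [List.mem_range'_1] at hb; omega)
          | (rw [List.mem_range'_1] at hb; omega)
  have ht : (a :: (a + 1) :: List.range' c (d + 1 - c)).toFinset =
      Finset.Icc a (a + 1) ∪ Finset.Icc c d := by
    ext x
    simp only [List.toFinset_cons, Finset.mem_insert, List.mem_toFinset, List.mem_range'_1,
      Finset.mem_union, Finset.mem_Icc]
    omega
  rw [← ht]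
  exact (List.toFinset_sort (· ≤ ·) hs.nodup).2 (hs.imp le_of_lt)

lemma forall2_pairList {k : ℕ} (f : Fin k → ℕ) (b : ℕ) :
    List.Forall₂ (· ≤ ·) (pairList f) (List.range' b (2 * k)) ↔
      ∀ s : Fin k, f s ≤ b + 2 * s.val := by
  induction k generalizing b with
  | zero => simp [pairList]
  | succ k ih =>
      have h2 : 2 * (k + 1) = (2 * k) + 1 + 1 := by ring
      rw [h2, List.range'_succ, List.range'_succ]
      show List.Forall₂ _ (f 0 :: (f 0 + 1) :: pairList (f ∘ Fin.succ)) _ ↔ _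
      rw [List.forall₂_cons, List.forall₂_cons]
      have : b + 1 + 1 = b + 2 := by omega
      rw [this, ih (f ∘ Fin.succ) (b + 2)]
      constructor
      · rintro ⟨h0, _, hs⟩ s
        refine Fin.cases ?_ (fun t => ?_) s
        · simpa using h0
        · have := hs t
          simp only [Function.comp_apply] at this
          simp only [Fin.val_succ]
          omega
      · intro h
        refine ⟨by simpa using h 0, by have := h 0; simp at this; omega, fun s => ?_⟩
        have := h s.succ
        simp only [Fin.val_succ] at this
        simpa using by omega
      
lemma gap_le {k : ℕ} {f : Fin k → ℕ}
    (hf : ∀ j j' : Fin k, j < j' → f j + 2 ≤ f j') :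
    ∀ (d : ℕ) (p q : Fin k), p.val + d = q.val → f p + 2 * d ≤ f q := by
  intro d
  induction d with
  | zero =>
      intro p q h
      have : p = q := Fin.ext (by omega)
      subst this
      omega
  | succ d ih =>
      intro p q h
      have hq' : p.val + d < k := by omega
      have h1 := ih p ⟨p.val + d, hq'⟩ rfl
      have h2 := hf ⟨p.val + d, hq'⟩ q (by simp [Fin.lt_def]; omega)
      omega

lemma Icc_pair (a : ℕ) : Finset.Icc a (a + 1) = ({a, a + 1} : Finset ℕ) := by
  ext x
  simp only [Finset.mem_Icc, Finset.mem_insert, Finset.mem_singleton]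
  omega

lemma exists_fin_snoc {k : ℕ} {p : Fin (k + 1) → Prop} :
    (∃ j, p j) ↔ (∃ j : Fin k, p j.castSucc) ∨ p (Fin.last k) := by
  constructor
  · rintro ⟨j, hj⟩
    rcases Fin.eq_castSucc_or_eq_last j with ⟨t, rfl⟩ | rfl
    · exact .inl ⟨t, hj⟩
    · exact .inr hj
  · rintro (⟨j, hj⟩ | hj) <;> exact ⟨_, hj⟩

lemma pairSet_snoc {k : ℕ} (h : Fin k → ℕ) (a : ℕ) :
    pairSet (Fin.snoc h a) = pairSet h ∪ {a, a + 1} := by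
  ext x
  simp only [mem_pairSet, Finset.mem_union, Finset.mem_insert, Finset.mem_singleton,
    exists_fin_snoc, Fin.snoc_castSucc, Fin.snoc_last]

lemma snoc_eq_self {k : ℕ} (f : Fin (k + 1) → ℕ) :
    Fin.snoc (f ∘ Fin.castSucc) (f (Fin.last k)) = f := by
  funext j
  rcases Fin.eq_castSucc_or_eq_last j with ⟨t, rfl⟩ | rfl <;> simp

lemma lep_char {K a c : ℕ} {i : ℕ} {f : Fin (K + 2) → ℕ} {F T : Finset ℕ}
    (hFs : F.sort (· ≤ ·) = i :: (i + 1) :: pairList f)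
    (hTs : T.sort (· ≤ ·) = a :: (a + 1) :: List.range' c (2 * (K + 2))) :
    lep F T ↔ (i ≤ a ∧ ∀ s : Fin (K + 2), f s ≤ c + 2 * s.val) := by
  rw [lep, hFs, hTs, List.forall₂_cons, List.forall₂_cons, forall2_pairList]
  constructor
  · rintro ⟨h1, _, h3⟩; exact ⟨h1, h3⟩
  · rintro ⟨h1, h3⟩; exact ⟨h1, by omega, h3⟩

lemma extract {K n i : ℕ} {G : Finset ℕ} (hG : ∀ x ∈ G, i + 2 ≤ x ∧ x ≤ n)
    (hgal : GaleEven (K + 3) 1 n (Finset.Icc i (i + 1) ∪ G)) :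
    ∃ f : Fin (K + 2) → ℕ, (∀ j j' : Fin (K + 2), j < j' → f j + 2 ≤ f j') ∧
      (∀ j, i + 2 ≤ f j ∧ f j + 1 ≤ n) ∧ G = pairSet f := by
  obtain ⟨f', hmono, hb, hEq⟩ := hgal
  rw [show (Finset.univ.biUnion fun j : Fin (K + 3) => {f' j, f' j + 1}) = pairSet f' from rfl]
    at hEq
  have h0le : ∀ j, f' 0 ≤ f' j := by
    intro j
    rcases eq_or_lt_of_le (Fin.zero_le j) with h | h
    · rw [← h]
    · have := hmono 0 j h; omega
  have hf0 : f' 0 = i := by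
    have hiF : i ∈ pairSet f' := by
      rw [← hEq]
      exact Finset.mem_union_left _ (by simp [Finset.mem_Icc])
    rw [mem_pairSet] at hiF
    obtain ⟨j, hj⟩ := hiF
    have h1 := h0le j
    have h2 : f' 0 ∈ pairSet f' := mem_pairSet.2 ⟨0, Or.inl rfl⟩
    rw [← hEq, Finset.mem_union, Finset.mem_Icc] at h2
    rcases h2 with h2 | h2
    · omega
    · have := hG _ h2; omega
  refine ⟨f' ∘ Fin.succ, fun j j' h => hmono j.succ j'.succ (by simpa using h),
    fun j => ?_, ?_⟩
  · have h1 := hmono 0 j.succ (Fin.succ_pos j)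
    have h2 := hb j.succ
    simp only [Function.comp_apply]
    omega
  · ext x
    constructor
    · intro hx
      have hx2 := hG x hx
      have : x ∈ pairSet f' := by rw [← hEq]; exact Finset.mem_union_right _ hx
      rw [mem_pairSet] at this
      obtain ⟨j, hj⟩ := this
      rcases Fin.eq_zero_or_eq_succ j with rfl | ⟨t, rfl⟩
      · rw [hf0] at hj; omega
      · exact mem_pairSet.2 ⟨t, hj⟩
    · intro hx
      rw [mem_pairSet] at hx
      obtain ⟨t, ht⟩ := hx
      have hge : i + 2 ≤ x := by
        have h1 := hmono 0 t.succ (Fin.succ_pos t)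
        simp only [Function.comp_apply] at ht
        rw [hf0] at h1
        omega
      have : x ∈ Finset.Icc i (i + 1) ∪ G := by
        rw [hEq]
        refine mem_pairSet.2 ⟨t.succ, ?_⟩
        simpa using ht
      rw [Finset.mem_union, Finset.mem_Icc] at this
      rcases this with h | h
      · omega
      · exact h

lemma cons_mono {k i : ℕ} {f : Fin (k + 1) → ℕ}
    (hmono : ∀ j j' : Fin (k + 1), j < j' → f j + 2 ≤ f j')
    (hge : ∀ j, i + 2 ≤ f j) :
    ∀ j j' : Fin (k + 2), j < j' →
      (Fin.cons i f : Fin (k + 2) → ℕ) j + 2 ≤ (Fin.cons i f : Fin (k + 2) → ℕ) j' := by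
  intro j j' h
  rcases Fin.eq_zero_or_eq_succ j' with rfl | ⟨t', rfl⟩
  · exact absurd h (by simp)
  rcases Fin.eq_zero_or_eq_succ j with rfl | ⟨t, rfl⟩
  · simpa using hge t'
  · simpa using hmono t t' (Fin.succ_lt_succ_iff.1 h)

lemma sort_cons_pairSet {k i : ℕ} {f : Fin (k + 1) → ℕ}
    (hmono : ∀ j j' : Fin (k + 1), j < j' → f j + 2 ≤ f j')
    (hge : ∀ j, i + 2 ≤ f j) :
    (Finset.Icc i (i + 1) ∪ pairSet f).sort (· ≤ ·) = i :: (i + 1) :: pairList f := by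
  have hcomp : (Fin.cons i f : Fin (k + 2) → ℕ) ∘ Fin.succ = f := funext fun t => by simp
  have hunion : pairSet (Fin.cons i f) = Finset.Icc i (i + 1) ∪ pairSet f := by
    rw [pairSet_succ, hcomp, Fin.cons_zero, Icc_pair]
  rw [← hunion, sort_pairSet (cons_mono hmono hge)]
  show (Fin.cons i f : Fin (k + 2) → ℕ) 0 :: ((Fin.cons i f : Fin (k + 2) → ℕ) 0 + 1) ::
      pairList ((Fin.cons i f : Fin (k + 2) → ℕ) ∘ Fin.succ) = _
  rw [hcomp, Fin.cons_zero]

lemma cons_pairSet {k i : ℕ} (f : Fin (k + 1) → ℕ) :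
    pairSet (Fin.cons i f : Fin (k + 2) → ℕ) = Finset.Icc i (i + 1) ∪ pairSet f := by
  have hcomp : (Fin.cons i f : Fin (k + 2) → ℕ) ∘ Fin.succ = f := funext fun t => by simp
  rw [pairSet_succ, hcomp, Fin.cons_zero, Icc_pair]

lemma snoc_mono {k : ℕ} {h : Fin (k + 1) → ℕ} {a : ℕ}
    (hmono : ∀ j j' : Fin (k + 1), j < j' → h j + 2 ≤ h j')
    (ha : ∀ j, h j + 2 ≤ a) :
    ∀ j j' : Fin (k + 2), j < j' →
      (Fin.snoc h a : Fin (k + 2) → ℕ) j + 2 ≤ (Fin.snoc h a : Fin (k + 2) → ℕ) j' := by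
  intro j j' hlt
  rcases Fin.eq_castSucc_or_eq_last j with ⟨t, rfl⟩ | rfl
  · rcases Fin.eq_castSucc_or_eq_last j' with ⟨t', rfl⟩ | rfl
    · simpa using hmono t t' (by simpa using hlt)
    · simpa using ha t
  · exfalso
    rcases Fin.eq_castSucc_or_eq_last j' with ⟨t', rfl⟩ | rfl
    · have h1 := t'.isLt
      rw [Fin.lt_def] at hlt
      simp only [Fin.val_last, Fin.coe_castSucc] at hlt
      omega
    · exact lt_irrefl _ hlt

lemma main_rev {K n i a : ℕ} {G : Finset ℕ} {h : Fin (K + 1) → ℕ}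
    (hn : 2 * (K + 3) + 1 ≤ n) (hi1 : 1 ≤ i) (hi2 : i ≤ n / 2 - (K + 3) + 1)
    (hm : ∀ j j' : Fin (K + 1), j < j' → h j + 2 ≤ h j')
    (hbl : ∀ j, i + 2 ≤ h j) (hbu : ∀ j, h j + 2 ≤ a)
    (ha1 : n - i - 1 ≤ a) (ha2 : a ≤ n - i)
    (hGeq : G = pairSet h ∪ Finset.Icc a (a + 1)) :
    InIdeal (K + 3) n (Aset (K + 3) n) (Finset.Icc i (i + 1) ∪ G) ∧
      ¬ InIdeal (K + 3) n (AsetMinus (K + 3) n) (Finset.Icc i (i + 1) ∪ G) := by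
  set f : Fin (K + 2) → ℕ := Fin.snoc h a with hf
  have hflast : f (Fin.last (K + 1)) = a := by simp [hf]
  have hfcast : ∀ t : Fin (K + 1), f t.castSucc = h t := by intro t; simp [hf]
  have hfm : ∀ j j' : Fin (K + 2), j < j' → f j + 2 ≤ f j' := snoc_mono hm hbu
  have hfl : ∀ j, i + 2 ≤ f j := by
    intro j
    rcases Fin.eq_castSucc_or_eq_last j with ⟨t, rfl⟩ | rfl
    · rw [hfcast]; exact hbl t
    · rw [hflast]; omega
  have hfu : ∀ j, f j + 1 ≤ n := by
    intro j
    rcases Fin.eq_castSucc_or_eq_last j with ⟨t, rfl⟩ | rfl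
    · rw [hfcast]; have := hbu t; omega
    · rw [hflast]; omega
  have hGset : G = pairSet f := by
    rw [hGeq, Icc_pair]; exact (pairSet_snoc h a).symm
  have hsortF : (Finset.Icc i (i + 1) ∪ G).sort (· ≤ ·) = i :: (i + 1) :: pairList f := by
    rw [hGset]; exact sort_cons_pairSet hfm hfl
  have hgapf : ∀ s : Fin (K + 2), f s + 2 * (K + 1 - s.val) ≤ a := by
    intro s
    have h1 := gap_le hfm (K + 1 - s.val) s (Fin.last (K + 1))
      (by simp only [Fin.val_last]; have := s.isLt; omega)
    rw [hflast] at h1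
    omega
  constructor
  · refine ⟨⟨Fin.cons i f, cons_mono hfm hfl, ?_, ?_⟩, Fset (K + 3) n i,
      ⟨i, hi1, hi2, rfl⟩, ?_⟩
    · intro j
      rcases Fin.eq_zero_or_eq_succ j with rfl | ⟨t, rfl⟩
      · simp only [Fin.cons_zero]; omega
      · simp only [Fin.cons_succ]
        have h1 := hfl t
        have h2 := hfu t
        omega
    · rw [show (Finset.univ.biUnion fun j : Fin (K + 3) =>
          {(Fin.cons i f : Fin (K + 3) → ℕ) j, (Fin.cons i f : Fin (K + 3) → ℕ) j + 1}) =
          pairSet (Fin.cons i f : Fin (K + 3) → ℕ) from rfl, cons_pairSet, hGset]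
    · have hc1 : i + 1 < n - 2 * (K + 3) + 4 - i := by omega
      have hsortT := sort_icc_union_icc i (n - 2 * (K + 3) + 4 - i) (n - i + 1) hc1
      rw [show (n - i + 1) + 1 - (n - 2 * (K + 3) + 4 - i) = 2 * (K + 2) from by omega]
        at hsortT
      refine (lep_char hsortF hsortT).2 ⟨le_refl i, fun s => ?_⟩
      have h1 := hgapf s
      have h2 := s.isLt
      omega
  · rintro ⟨-, G', ⟨j, hj2, hjle, rfl⟩, hlep⟩
    have hIccj : Finset.Icc (j - 1) j = Finset.Icc (j - 1) ((j - 1) + 1) := by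
      congr 1; omega
    rw [hIccj] at hlep
    have hc2 : (j - 1) + 1 < n - 2 * (K + 3) + 3 - j := by omega
    have hsortM := sort_icc_union_icc (j - 1) (n - 2 * (K + 3) + 3 - j) (n - j) hc2
    rw [show (n - j) + 1 - (n - 2 * (K + 3) + 3 - j) = 2 * (K + 2) from by omega] at hsortM
    obtain ⟨hij, hs⟩ := (lep_char hsortF hsortM).1 hlep
    have h1 := hs (Fin.last (K + 1))
    rw [hflast] at h1
    simp only [Fin.val_last] at h1
    omega

/-- for `k ≥ 3`, `n ≥ 2k+1`, and `1 ≤ i ≤ ⌊n/2⌋−k+1`, a set of the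
form `[i,i+1] ∪ G` belongs to the ideal generated by `A_n` but not to the ideal
generated by `A_n − 1_{2k}` (i.e. is a facet of `B_{A_n}`) if and only if
`G = H ∪ [n−i, n−i+1]` with `H ∈ F_{2k−4}^{[i+2, n−i−1]}`, or
`G = H ∪ [n−i−1, n−i]` with `H ∈ F_{2k−4}^{[i+2, n−i−2]}`. -/
theorem stmt11 (k n i : ℕ) (hk : 3 ≤ k) (hn : 2 * k + 1 ≤ n)
    (hi1 : 1 ≤ i) (hi2 : i ≤ n / 2 - k + 1)
    (G : Finset ℕ) (hG : ∀ x ∈ G, i + 2 ≤ x ∧ x ≤ n) :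
    (InIdeal k n (Aset k n) (Finset.Icc i (i + 1) ∪ G) ∧
      ¬ InIdeal k n (AsetMinus k n) (Finset.Icc i (i + 1) ∪ G)) ↔
    ((∃ H : Finset ℕ, GaleEven (k - 2) (i + 2) (n - i - 1) H ∧
        G = H ∪ Finset.Icc (n - i) (n - i + 1)) ∨
     (∃ H : Finset ℕ, GaleEven (k - 2) (i + 2) (n - i - 2) H ∧
        G = H ∪ Finset.Icc (n - i - 1) (n - i))) := by
  obtain ⟨K, rfl⟩ : ∃ K, k = K + 3 := ⟨k - 3, by omega⟩
  constructor
  · rintro ⟨⟨hgal, G', ⟨j, hj1, hj2, rfl⟩, hlep⟩, hnot⟩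
    obtain ⟨f, hmono, hb, hGset⟩ := extract hG hgal
    have hsortF : (Finset.Icc i (i + 1) ∪ G).sort (· ≤ ·) = i :: (i + 1) :: pairList f := by
      rw [hGset]; exact sort_cons_pairSet hmono (fun t => (hb t).1)
    have hc1 : j + 1 < n - 2 * (K + 3) + 4 - j := by omega
    have hsortT := sort_icc_union_icc j (n - 2 * (K + 3) + 4 - j) (n - j + 1) hc1
    rw [show (n - j + 1) + 1 - (n - 2 * (K + 3) + 4 - j) = 2 * (K + 2) from by omega]
      at hsortT
    obtain ⟨hij, hsA⟩ := (lep_char hsortF hsortT).1 hlep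
    have hA : ∀ s : Fin (K + 2), f s ≤ n - 2 * (K + 3) + 4 - i + 2 * s.val := by
      intro s
      have h1 := hsA s
      have h2 := s.isLt
      omega
    have hgap : ∀ s : Fin (K + 2), f s + 2 * (K + 1 - s.val) ≤ f (Fin.last (K + 1)) := by
      intro s
      have h1 := gap_le hmono (K + 1 - s.val) s (Fin.last (K + 1))
        (by simp only [Fin.val_last]; have := s.isLt; omega)
      omega
    have hlast_le : f (Fin.last (K + 1)) ≤ n - i := by
      have h1 := hA (Fin.last (K + 1))
      simp only [Fin.val_last] at h1
      omega
    have hlast_ge : n - i - 1 ≤ f (Fin.last (K + 1)) := by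
      by_contra hcon
      push_neg at hcon
      have hi' : i + 1 ≤ n / 2 - (K + 3) + 1 := by
        by_contra hi'
        have h0 := hgap 0
        have hf0 := (hb 0).1
        simp only [Fin.val_zero] at h0
        omega
      apply hnot
      refine ⟨hgal, _, ⟨i + 1, by omega, hi', rfl⟩, ?_⟩
      show lep (Finset.Icc i (i + 1) ∪ G)
        (Finset.Icc i (i + 1) ∪
          Finset.Icc (n - 2 * (K + 3) + 3 - (i + 1)) (n - (i + 1)))
      have hc2 : i + 1 < n - 2 * (K + 3) + 3 - (i + 1) := by omega
      have hsortM := sort_icc_union_icc i (n - 2 * (K + 3) + 3 - (i + 1)) (n - (i + 1)) hc2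
      rw [show (n - (i + 1)) + 1 - (n - 2 * (K + 3) + 3 - (i + 1)) = 2 * (K + 2) from by omega]
        at hsortM
      refine (lep_char hsortF hsortM).2 ⟨le_refl i, fun s => ?_⟩
      have h1 := hgap s
      have h2 := s.isLt
      omega
    have hgap2 : ∀ t : Fin (K + 1), f t.castSucc + 2 * (K + 1 - t.val) ≤ f (Fin.last (K + 1)) := by
      intro t
      have h1 := hgap t.castSucc
      simp only [Fin.coe_castSucc] at h1
      exact h1
    have hmono2 : ∀ t t' : Fin (K + 1), t < t' → f t.castSucc + 2 ≤ f t'.castSucc :=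
      fun t t' ht => hmono _ _ (by simpa using ht)
    have hcase : f (Fin.last (K + 1)) = n - i ∨ f (Fin.last (K + 1)) = n - i - 1 := by omega
    rcases hcase with hlv | hlv
    · left
      refine ⟨pairSet (f ∘ Fin.castSucc), ⟨f ∘ Fin.castSucc, hmono2, fun t => ?_, rfl⟩, ?_⟩
      · have h1 := (hb t.castSucc).1
        have h2 := hgap2 t
        have h3 := t.isLt
        constructor
        · exact h1
        · simp only [Function.comp_apply]; omega
      · rw [hGset, Icc_pair, ← hlv, ← pairSet_snoc, snoc_eq_self]
    · right
      refine ⟨pairSet (f ∘ Fin.castSucc), ⟨f ∘ Fin.castSucc, hmono2, fun t => ?_, rfl⟩, ?_⟩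
      · have h1 := (hb t.castSucc).1
        have h2 := hgap2 t
        have h3 := t.isLt
        constructor
        · exact h1
        · simp only [Function.comp_apply]; omega
      · rw [hGset, show Finset.Icc (n - i - 1) (n - i) =
          Finset.Icc (n - i - 1) ((n - i - 1) + 1) from by congr 1; omega,
          Icc_pair, ← hlv, ← pairSet_snoc, snoc_eq_self]
  · rintro (⟨H, ⟨h, hm, hbH, rfl⟩, rfl⟩ | ⟨H, ⟨h, hm, hbH, rfl⟩, rfl⟩)
    · exact main_rev hn hi1 hi2 hm (fun t => (hbH t).1)
        (fun t => by have := (hbH t).2; have := (hbH t).1; omega)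
        (by omega) (le_refl _) rfl
    · refine main_rev hn hi1 hi2 hm (fun t => (hbH t).1)
        (fun t => by have h1 := (hbH t).2; have h2 := (hbH t).1; omega)
        (le_refl _) (by have h1 := (hbH ⟨0, by omega⟩).1; have h2 := (hbH ⟨0, by omega⟩).2; omega) ?_
      rw [show Finset.Icc (n - i - 1) (n - i) =
        Finset.Icc (n - i - 1) ((n - i - 1) + 1) from by congr 1; omega]
      rfl
end

section
/- Let k ≥ 3 and n ≥ 2k+1, with A = A_n as above. For each 1 ≤ i ≤ ⌊n/2⌋−k+1 and each H ∈ F_{2k−4}^{[i+2, n−i]}, the (2k−1)-set F = [i, i+1] ∪ H ∪ {n−i+1} is contained in exactly one facet of the relative squeezed ball B_A, namely F ∪ {m} where m is the maximum element of [i+2, n−i] \ H. Consequently F is a facet of the boundary sphere ∂B_A. -/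
set_option maxHeartbeats 1000000


open Finset

section Helpers

lemma card_filter_eq_countP (S : Finset ℕ) (p : ℕ → Prop) [DecidablePred p] :
    (S.filter p).card = (S.sort (· ≤ ·)).countP (fun x => decide (p x)) := by
  have h1 : (S.filter p).card = Multiset.countP p S.val := by
    rw [Finset.card_filter]
    simp [Multiset.countP_eq_card_filter, Finset.filter]
  rw [h1, ← Finset.coe_toList S, Multiset.coe_countP,
    (Finset.sort_perm_toList S (· ≤ ·)).countP_eq]

lemma countP_le_of_forall₂ {a b : List ℕ} (h : List.Forall₂ (· ≤ ·) a b) (t : ℕ) :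
    b.countP (fun z => decide (z ≤ t)) ≤ a.countP (fun z => decide (z ≤ t)) := by
  induction h with
  | nil => simp
  | @cons x y l₁ l₂ hxy htl ih =>
    rw [List.countP_cons, List.countP_cons]
    have : (decide (y ≤ t) = true → decide (x ≤ t) = true) := by
      simp only [decide_eq_true_eq]; omega
    split <;> split <;> simp_all <;> omega

lemma forall₂_of_countP : ∀ (a b : List ℕ), a.Pairwise (· < ·) → b.Pairwise (· < ·) →
    a.length = b.length →
    (∀ t, b.countP (fun z => decide (z ≤ t)) ≤ a.countP (fun z => decide (z ≤ t))) →
    List.Forall₂ (· ≤ ·) a b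
  | [], [], _, _, _, _ => List.Forall₂.nil
  | [], y :: b, _, _, hlen, _ => by simp at hlen
  | x :: a, [], _, _, hlen, _ => by simp at hlen
  | x :: a, y :: b, ha, hb, hlen, h => by
    obtain ⟨hxa, ha'⟩ := List.pairwise_cons.mp ha
    obtain ⟨hyb, hb'⟩ := List.pairwise_cons.mp hb
    have hxy : x ≤ y := by
      by_contra hlt
      have h1 := h y
      rw [List.countP_cons, List.countP_cons] at h1
      have hcb : (List.countP (fun z => decide (z ≤ y)) a) = 0 := by
        rw [List.countP_eq_zero]
        intro z hz
        have := hxa z hz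
        simp only [decide_eq_true_eq]; omega
      simp only [decide_eq_true_eq] at h1
      rw [hcb] at h1
      rw [if_pos (le_refl y), if_neg (by omega)] at h1
      omega
    refine List.Forall₂.cons hxy (forall₂_of_countP a b ha' hb' (by simpa using hlen) ?_)
    intro t
    have h1 := h t
    rw [List.countP_cons, List.countP_cons] at h1
    by_cases hxt : x ≤ t
    · by_cases hyt : y ≤ t
      · rw [if_pos (by simpa), if_pos (by simpa)] at h1; omega
      · have : (List.countP (fun z => decide (z ≤ t)) b) = 0 := by
          rw [List.countP_eq_zero]
          intro z hz
          have := hyb z hz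
          simp only [decide_eq_true_eq]; omega
        omega
    · have h0a : (List.countP (fun z => decide (z ≤ t)) a) = 0 := by
        rw [List.countP_eq_zero]; intro z hz; have := hxa z hz
        simp only [decide_eq_true_eq]; omega
      have h0b : (List.countP (fun z => decide (z ≤ t)) b) = 0 := by
        rw [List.countP_eq_zero]; intro z hz; have := hyb z hz
        simp only [decide_eq_true_eq]; omega
      omega

lemma lep_card {F G : Finset ℕ} (h : lep F G) : F.card = G.card := by
  have := List.Forall₂.length_eq h
  rwa [Finset.length_sort, Finset.length_sort] at this

lemma lep_counts {F G : Finset ℕ} (h : lep F G) (t : ℕ) :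
    (G.filter (· ≤ t)).card ≤ (F.filter (· ≤ t)).card := by
  rw [card_filter_eq_countP, card_filter_eq_countP]
  exact countP_le_of_forall₂ h t

lemma lep_of_counts {F G : Finset ℕ} (hcard : F.card = G.card)
    (h : ∀ t, (G.filter (· ≤ t)).card ≤ (F.filter (· ≤ t)).card) : lep F G := by
  refine forall₂_of_countP _ _ (Finset.sortedLT_sort F).pairwise (Finset.sortedLT_sort G).pairwise
    (by rw [Finset.length_sort, Finset.length_sort]; exact hcard) ?_
  intro t
  rw [← card_filter_eq_countP, ← card_filter_eq_countP]
  exact h t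

lemma lep_exists_ge {F G : Finset ℕ} (h : lep F G) {x : ℕ} (hx : x ∈ F) :
    ∃ y ∈ G, x ≤ y := by
  rcases Nat.eq_zero_or_pos x with rfl | hx1
  · have hG : G.Nonempty := by
      rw [← Finset.card_pos, ← lep_card h, Finset.card_pos]; exact ⟨_, hx⟩
    exact ⟨hG.choose, hG.choose_spec, Nat.zero_le _⟩
  by_contra hc
  push_neg at hc
  have hG : (G.filter (· ≤ x - 1)).card = G.card := by
    rw [Finset.filter_true_of_mem]
    intro y hy; have := hc y hy; omega
  have hF : (F.filter (· ≤ x - 1)).card < F.card := by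
    apply Finset.card_lt_card
    refine ⟨Finset.filter_subset _ _, fun hsub => ?_⟩
    have := Finset.mem_filter.mp (hsub hx)
    omega
  have h1 := lep_counts h (x - 1)
  have h2 := lep_card h
  omega

lemma lep_exists_le {F G : Finset ℕ} (h : lep F G) {y : ℕ} (hy : y ∈ G) :
    ∃ x ∈ F, x ≤ y := by
  have h1 : 1 ≤ (G.filter (· ≤ y)).card :=
    Finset.card_pos.mpr ⟨y, Finset.mem_filter.mpr ⟨hy, le_refl y⟩⟩
  have h2 := lep_counts h y
  have h3 : 0 < (F.filter (· ≤ y)).card := by omega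
  obtain ⟨x, hx⟩ := Finset.card_pos.mp h3
  exact ⟨x, (Finset.mem_filter.mp hx).1, (Finset.mem_filter.mp hx).2⟩

lemma pair_card_biUnion {k : ℕ} (f : Fin k → ℕ)
    (hgap : ∀ j j' : Fin k, j < j' → f j + 2 ≤ f j') (J : Finset (Fin k)) :
    (J.biUnion fun j => ({f j, f j + 1} : Finset ℕ)).card = 2 * J.card := by
  rw [Finset.card_biUnion]
  · have : ∀ j ∈ J, ({f j, f j + 1} : Finset ℕ).card = 2 := by
      intro j _
      rw [Finset.card_insert_of_notMem (by simp), Finset.card_singleton]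
    rw [Finset.sum_congr rfl this, Finset.sum_const, smul_eq_mul, mul_comm]
  · intro a _ b _ hab
    have : f a + 2 ≤ f b ∨ f b + 2 ≤ f a := by
      rcases lt_or_gt_of_ne hab with h | h
      · exact Or.inl (hgap a b h)
      · exact Or.inr (hgap b a h)
    simp only [Finset.disjoint_insert_left, Finset.disjoint_singleton_left,
      Finset.mem_insert, Finset.mem_singleton]
    omega

lemma gale_card {k m n : ℕ} {S : Finset ℕ} (h : GaleEven k m n S) : S.card = 2 * k := by
  obtain ⟨f, hgap, _, rfl⟩ := h
  rw [pair_card_biUnion f hgap, Finset.card_univ, Fintype.card_fin]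

lemma gale_mem {k m n : ℕ} {S : Finset ℕ} (h : GaleEven k m n S) :
    ∀ x ∈ S, m ≤ x ∧ x ≤ n := by
  obtain ⟨f, _, hbnd, rfl⟩ := h
  intro x hx
  simp only [Finset.mem_biUnion, Finset.mem_univ, true_and, Finset.mem_insert,
    Finset.mem_singleton] at hx
  obtain ⟨j, hj⟩ := hx
  have := hbnd j
  omega

lemma gale_parity {k m n : ℕ} {S : Finset ℕ} (h : GaleEven k m n S) (x : ℕ)
    (hx : (x ∈ S ∧ x + 1 ∉ S) ∨ (x ∉ S ∧ x + 1 ∈ S)) :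
    Even ((S.filter (fun y => x < y)).card) := by
  obtain ⟨f, hgap, hbnd, rfl⟩ := h
  have hmono : ∀ j j' : Fin k, j ≤ j' → f j ≤ f j' := by
    intro j j' hle
    rcases eq_or_lt_of_le hle with rfl | hlt
    · exact le_refl _
    · have := hgap j j' hlt; omega
  have hmem : ∀ z, (z ∈ Finset.univ.biUnion fun j : Fin k => ({f j, f j + 1} : Finset ℕ))
      ↔ ∃ j, z = f j ∨ z = f j + 1 := by
    intro z
    simp [Finset.mem_biUnion]
  rcases hx with ⟨hx1, hx2⟩ | ⟨hx1, hx2⟩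
  · obtain ⟨j₀, hj₀⟩ := (hmem x).mp hx1
    have hxj : x = f j₀ + 1 := by
      rcases hj₀ with h1 | h1
      · exact absurd ((hmem (x+1)).mpr ⟨j₀, Or.inr (by omega)⟩) hx2
      · exact h1
    have hfe : (Finset.univ.biUnion fun j : Fin k => ({f j, f j + 1} : Finset ℕ)).filter
        (fun y => x < y) = (Finset.univ.filter (fun j => j₀ < j)).biUnion
          (fun j => ({f j, f j + 1} : Finset ℕ)) := by
      ext z
      simp only [Finset.mem_filter, Finset.mem_biUnion, Finset.mem_univ, true_and,
        Finset.mem_insert, Finset.mem_singleton]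
      constructor
      · rintro ⟨⟨j, hj⟩, hz⟩
        refine ⟨j, ?_, hj⟩
        by_contra hle
        have := hmono j j₀ (le_of_not_gt hle)
        omega
      · rintro ⟨j, hj₀j, hj⟩
        have := hgap j₀ j hj₀j
        exact ⟨⟨j, hj⟩, by omega⟩
    rw [hfe, pair_card_biUnion f hgap]
    exact ⟨_, two_mul _⟩
  · obtain ⟨j₀, hj₀⟩ := (hmem (x+1)).mp hx2
    have hxj : x + 1 = f j₀ := by
      rcases hj₀ with h1 | h1
      · exact h1
      · exact absurd ((hmem x).mpr ⟨j₀, Or.inl (by omega)⟩) hx1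
    have hfe : (Finset.univ.biUnion fun j : Fin k => ({f j, f j + 1} : Finset ℕ)).filter
        (fun y => x < y) = (Finset.univ.filter (fun j => j₀ ≤ j)).biUnion
          (fun j => ({f j, f j + 1} : Finset ℕ)) := by
      ext z
      simp only [Finset.mem_filter, Finset.mem_biUnion, Finset.mem_univ, true_and,
        Finset.mem_insert, Finset.mem_singleton]
      constructor
      · rintro ⟨⟨j, hj⟩, hz⟩
        refine ⟨j, ?_, hj⟩
        by_contra hle
        have := hgap j j₀ (lt_of_not_ge hle)
        omega
      · rintro ⟨j, hj₀j, hj⟩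
        have := hmono j₀ j hj₀j
        exact ⟨⟨j, hj⟩, by omega⟩
    rw [hfe, pair_card_biUnion f hgap]
    exact ⟨_, two_mul _⟩

lemma gale_build : ∀ (k c n : ℕ) (S : Finset ℕ), S.card = 2 * k →
    (∀ x ∈ S, c ≤ x ∧ x ≤ n) →
    (∀ x ∈ S, x + 1 ∉ S → Even ((S.filter (fun y => x < y)).card)) →
    GaleEven k c n S := by
  intro k
  induction k with
  | zero =>
    intro c n S hcard _ _
    refine ⟨Fin.elim0, fun j => j.elim0, fun j => j.elim0, ?_⟩
    rw [Finset.card_eq_zero.mp hcard]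
    simp
  | succ k ih =>
    intro c n S hcard hbnd hpar
    have hne : S.Nonempty := Finset.card_pos.mp (by omega)
    set a := S.min' hne with ha
    have haS : a ∈ S := S.min'_mem hne
    have hamin : ∀ z ∈ S, a ≤ z := fun z hz => S.min'_le z hz
    have ha1 : a + 1 ∈ S := by
      by_contra hc
      have := hpar a haS hc
      have hfe : S.filter (fun y => a < y) = S.erase a := by
        ext z
        simp only [Finset.mem_filter, Finset.mem_erase]
        constructor
        · rintro ⟨h1, h2⟩; exact ⟨by omega, h1⟩
        · rintro ⟨h1, h2⟩; exact ⟨h2, lt_of_le_of_ne (hamin z h2) (Ne.symm h1)⟩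
      rw [hfe, Finset.card_erase_of_mem haS, hcard] at this
      rw [Nat.even_iff] at this
      omega
    set S' := (S.erase a).erase (a + 1) with hS'
    have hS'mem : ∀ z, z ∈ S' ↔ z ∈ S ∧ a + 2 ≤ z := by
      intro z
      simp only [hS', Finset.mem_erase]
      constructor
      · rintro ⟨h1, h2, h3⟩
        refine ⟨h3, ?_⟩
        have := hamin z h3
        omega
      · rintro ⟨h1, h2⟩
        exact ⟨by omega, by omega, h1⟩
    have hS'card : S'.card = 2 * k := by
      rw [hS', Finset.card_erase_of_mem (Finset.mem_erase.mpr ⟨by omega, ha1⟩),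
        Finset.card_erase_of_mem haS, hcard]
      omega
    have hbnd' : ∀ x ∈ S', a + 2 ≤ x ∧ x ≤ n := by
      intro x hx
      rw [hS'mem] at hx
      exact ⟨hx.2, (hbnd x hx.1).2⟩
    have hpar' : ∀ x ∈ S', x + 1 ∉ S' → Even ((S'.filter (fun y => x < y)).card) := by
      intro x hx hx1
      rw [hS'mem] at hx
      have hx1' : x + 1 ∉ S := by
        intro hc
        exact hx1 ((hS'mem (x+1)).mpr ⟨hc, by omega⟩)
      have := hpar x hx.1 hx1'
      have hfe : S'.filter (fun y => x < y) = S.filter (fun y => x < y) := by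
        ext z
        simp only [Finset.mem_filter, hS'mem]
        constructor
        · rintro ⟨⟨h1, _⟩, h2⟩; exact ⟨h1, h2⟩
        · rintro ⟨h1, h2⟩; exact ⟨⟨h1, by omega⟩, h2⟩
      rwa [hfe]
    obtain ⟨f', hgap', hbnd'', hrep'⟩ := ih (a + 2) n S' hS'card hbnd' hpar'
    refine ⟨Fin.cases a f', ?_, ?_, ?_⟩
    · intro j j' hlt
      induction j using Fin.cases with
      | zero =>
        induction j' using Fin.cases with
        | zero => simp at hlt
        | succ j'' =>
          simp only [Fin.cases_zero, Fin.cases_succ]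
          exact (hbnd'' j'').1
      | succ j'' =>
        induction j' using Fin.cases with
        | zero => exact absurd hlt (Fin.not_lt_zero _)
        | succ j3 =>
          simp only [Fin.cases_succ]
          exact hgap' j'' j3 (by exact_mod_cast Fin.succ_lt_succ_iff.mp hlt)
    · intro j
      induction j using Fin.cases with
      | zero =>
        simp only [Fin.cases_zero]
        exact ⟨(hbnd a haS).1, (hbnd (a+1) ha1).2⟩
      | succ j'' =>
        simp only [Fin.cases_succ]
        refine ⟨le_trans (hbnd a haS).1 (by have := (hbnd'' j'').1; omega), (hbnd'' j'').2⟩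
    · ext z
      simp only [Finset.mem_biUnion, Finset.mem_univ, true_and, Finset.mem_insert,
        Finset.mem_singleton]
      rw [show (∃ j : Fin (k+1), z = Fin.cases a f' j ∨ z = Fin.cases a f' j + 1) ↔
        ((z = a ∨ z = a + 1) ∨ ∃ j : Fin k, z = f' j ∨ z = f' j + 1) from ?_]
      · constructor
        · intro hz
          by_cases hza : z = a ∨ z = a + 1
          · exact Or.inl hza
          · refine Or.inr ?_
            have hzS' : z ∈ S' := (hS'mem z).mpr ⟨hz, by have := hamin z hz; omega⟩
            rw [hrep'] at hzS'
            simpa using hzS'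
        · rintro ((rfl | rfl) | ⟨j, hj⟩)
          · exact haS
          · exact ha1
          · have : z ∈ S' := by
              rw [hrep']
              simp only [Finset.mem_biUnion, Finset.mem_univ, true_and, Finset.mem_insert,
                Finset.mem_singleton]
              exact ⟨j, hj⟩
            exact ((hS'mem z).mp this).1
      · rw [Fin.exists_fin_succ]
        simp [Fin.cases_zero, Fin.cases_succ]

lemma counts_vs_block {T : Finset ℕ} {a b : ℕ} (hab : a ≤ b) (hcard : T.card = b + 1 - a)
    (hub : ∀ x ∈ T, x ≤ b) (t : ℕ) :
    ((Finset.Icc a b).filter (· ≤ t)).card ≤ (T.filter (· ≤ t)).card := by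
  have h1 : (T.filter (· ≤ t)).card + (T.filter (fun x => ¬ x ≤ t)).card = T.card :=
    Finset.card_filter_add_card_filter_not _
  have h2 : (T.filter (fun x => ¬ x ≤ t)).card ≤ b - t := by
    calc (T.filter (fun x => ¬ x ≤ t)).card ≤ (Finset.Icc (t+1) b).card := by
          apply Finset.card_le_card
          intro x hx
          rw [Finset.mem_filter] at hx
          rw [Finset.mem_Icc]
          exact ⟨by omega, hub x hx.1⟩
      _ = b - t := by rw [Nat.card_Icc]; omega
  have h3 : ((Finset.Icc a b).filter (· ≤ t)).card = min b t + 1 - a := by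
    have he : (Finset.Icc a b).filter (· ≤ t) = Finset.Icc a (min b t) := by
      ext z
      simp only [Finset.mem_filter, Finset.mem_Icc]
      omega
    rw [he, Nat.card_Icc]
  omega

end Helpers

/-- for `k ≥ 3`, `n ≥ 2k+1`, `1 ≤ i ≤ ⌊n/2⌋−k+1`, and
`H ∈ F_{2k−4}^{[i+2, n−i]}`, the `(2k−1)`-set `F = [i,i+1] ∪ H ∪ {n−i+1}` is
contained in exactly one facet of the relative squeezed ball `B_{A_n}`, namely
`F ∪ {m}` where `m = max([i+2, n−i] \\ H)`; consequently `F` is a facet of the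
boundary sphere `∂B_{A_n}`. -/
theorem stmt12 (k n i : ℕ) (hk : 3 ≤ k) (hn : 2 * k + 1 ≤ n)
    (hi1 : 1 ≤ i) (hi2 : i ≤ n / 2 - k + 1)
    (H : Finset ℕ) (hH : GaleEven (k - 2) (i + 2) (n - i) H)
    (m : ℕ) (hm : m ∈ Finset.Icc (i + 2) (n - i) \ H)
    (hmax : ∀ x ∈ Finset.Icc (i + 2) (n - i) \ H, x ≤ m) :
    IsBAFacet k n ((Finset.Icc i (i + 1) ∪ H ∪ {n - i + 1}) ∪ {m}) ∧
    ∀ G : Finset ℕ, IsBAFacet k n G →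
      (Finset.Icc i (i + 1) ∪ H ∪ {n - i + 1}) ⊆ G →
      G = (Finset.Icc i (i + 1) ∪ H ∪ {n - i + 1}) ∪ {m} := by
  -- arithmetic setup
  have hnk : 2 * i + 2 * k ≤ n + 2 := by omega
  obtain ⟨hmIcc, hmH⟩ := Finset.mem_sdiff.mp hm
  rw [Finset.mem_Icc] at hmIcc
  have hHcard : H.card = 2 * (k - 2) := gale_card hH
  have hHmem : ∀ x ∈ H, i + 2 ≤ x ∧ x ≤ n - i := gale_mem hH
  have hKF : ∀ z, m < z → z ≤ n - i → z ∈ H := by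
    intro z h1 h2
    by_contra hc
    have hz : z ∈ Finset.Icc (i + 2) (n - i) \ H :=
      Finset.mem_sdiff.mpr ⟨Finset.mem_Icc.mpr ⟨by omega, h2⟩, hc⟩
    have := hmax z hz
    omega
  set F : Finset ℕ := Finset.Icc i (i + 1) ∪ H ∪ {n - i + 1} with hFdef
  have hFmem : ∀ z, z ∈ F ↔ (z = i ∨ z = i + 1 ∨ z ∈ H ∨ z = n - i + 1) := by
    intro z
    have hIcc : z ∈ Finset.Icc i (i + 1) ↔ z = i ∨ z = i + 1 := by
      rw [Finset.mem_Icc]; omega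
    rw [hFdef]
    simp only [Finset.mem_union, Finset.mem_singleton, hIcc]
    tauto
  have hFlb : ∀ z ∈ F, i ≤ z := by
    intro z hz
    rw [hFmem] at hz
    rcases hz with rfl | rfl | h | rfl
    · omega
    · omega
    · have := hHmem z h; omega
    · omega
  have hFub : ∀ z ∈ F, z ≤ n - i + 1 := by
    intro z hz
    rw [hFmem] at hz
    rcases hz with rfl | rfl | h | rfl
    · omega
    · omega
    · have := hHmem z h; omega
    · omega
  have hmF : m ∉ F := by
    rw [hFmem]
    rintro (rfl | rfl | h | rfl)
    · omega
    · omega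
    · exact hmH h
    · omega
  have hFcard : F.card = 2 * k - 1 := by
    have hd1 : Disjoint (Finset.Icc i (i + 1)) H := by
      rw [Finset.disjoint_left]
      intro z hz hzH
      rw [Finset.mem_Icc] at hz
      have := hHmem z hzH
      omega
    have hd2 : Disjoint (Finset.Icc i (i + 1) ∪ H) ({n - i + 1} : Finset ℕ) := by
      rw [Finset.disjoint_right]
      intro z hz hzU
      rw [Finset.mem_singleton] at hz
      subst hz
      rcases Finset.mem_union.mp hzU with h | h
      · rw [Finset.mem_Icc] at h; omega
      · have := hHmem _ h; omega
    rw [hFdef, Finset.card_union_of_disjoint hd2, Finset.card_union_of_disjoint hd1,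
      Nat.card_Icc, hHcard, Finset.card_singleton]
    omega
  have hSmem : ∀ z, z ∈ F ∪ {m} ↔ (z = i ∨ z = i + 1 ∨ z ∈ H ∨ z = n - i + 1 ∨ z = m) := by
    intro z
    rw [Finset.mem_union, Finset.mem_singleton, hFmem]
    tauto
  have hScard : (F ∪ {m}).card = 2 * k := by
    rw [Finset.card_union_of_disjoint (Finset.disjoint_singleton_right.mpr hmF),
      hFcard, Finset.card_singleton]
    omega
  have hiF : i ∈ F := (hFmem i).mpr (Or.inl rfl)
  have hi1F : i + 1 ∈ F := (hFmem (i + 1)).mpr (Or.inr (Or.inl rfl))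
  have htopF : n - i + 1 ∈ F := (hFmem _).mpr (Or.inr (Or.inr (Or.inr rfl)))
  have hHsubF : ∀ z ∈ H, z ∈ F := fun z hz => (hFmem z).mpr (Or.inr (Or.inr (Or.inl hz)))
  -- the parity fact about the top of H
  have hHtopfilter : H.filter (fun z => m < z) = Finset.Icc (m + 1) (n - i) := by
    ext z
    simp only [Finset.mem_filter, Finset.mem_Icc]
    constructor
    · rintro ⟨hzH, h⟩
      exact ⟨by omega, (hHmem z hzH).2⟩
    · rintro ⟨h1, h2⟩
      exact ⟨hKF z (by omega) h2, by omega⟩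
  have hHtop : Even (n - i - m) := by
    by_cases hmn : m = n - i
    · rw [hmn]; simp
    · have hp2 := gale_parity hH m (Or.inr ⟨hmH, hKF (m + 1) (by omega) (by omega)⟩)
      rwa [hHtopfilter, Nat.card_Icc, show n - i + 1 - (m + 1) = n - i - m from by omega] at hp2
  -- Gale property of F ∪ {m}
  have hSgale : GaleEven k 1 n (F ∪ {m}) := by
    apply gale_build k 1 n _ hScard
    · intro x hx
      rw [hSmem] at hx
      rcases hx with rfl | rfl | h | rfl | rfl
      · omega
      · omega
      · have := hHmem x h; omega
      · omega
      · omega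
    · intro x hx hx1
      rcases (hSmem x).mp hx with h0 | h0 | hxH | h0 | h0
      · exact absurd ((hSmem (x + 1)).mpr (Or.inr (Or.inl (by omega)))) hx1
      · -- x = i + 1
        subst h0
        have hfe : (F ∪ {m}).filter (fun y => i + 1 < y) =
            H ∪ ({m, n - i + 1} : Finset ℕ) := by
          ext z
          simp only [Finset.mem_filter, Finset.mem_union, Finset.mem_insert,
            Finset.mem_singleton, hSmem]
          constructor
          · rintro ⟨rfl | rfl | h | rfl | rfl, h2⟩
            · omega
            · omega
            · tauto
            · tauto
            · tauto
          · rintro (h | rfl | rfl)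
            · exact ⟨Or.inr (Or.inr (Or.inl h)), by have := hHmem z h; omega⟩
            · exact ⟨by tauto, by omega⟩
            · exact ⟨by tauto, by omega⟩
        rw [hfe]
        have hd : Disjoint H ({m, n - i + 1} : Finset ℕ) := by
          rw [Finset.disjoint_right]
          intro z hz hzH
          rcases Finset.mem_insert.mp hz with rfl | hz2
          · exact hmH hzH
          · rw [Finset.mem_singleton] at hz2; subst hz2
            have := hHmem _ hzH; omega
        rw [Finset.card_union_of_disjoint hd, hHcard,
          Finset.card_insert_of_notMem (by rw [Finset.mem_singleton]; omega),
          Finset.card_singleton]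
        have : 2 * (k - 2) + 2 = 2 * (k - 1) := by omega
        rw [this]
        exact even_two_mul _
      · -- x ∈ H
        have hxb := hHmem x hxH
        have hxm : x < m := by
          by_contra hc
          push_neg at hc
          have hxm' : m < x := lt_of_le_of_ne hc (fun h => hmH (h ▸ hxH))
          have hxn : x ≠ n - i := by
            intro h
            exact hx1 ((hSmem (x + 1)).mpr (Or.inr (Or.inr (Or.inr (Or.inl (by omega))))))
          have : x + 1 ∈ H := hKF (x + 1) (by omega) (by have := hxb.2; omega)
          exact hx1 ((hSmem (x + 1)).mpr (Or.inr (Or.inr (Or.inl this))))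
        have hx1H : x + 1 ∉ H := fun hc => hx1 ((hSmem (x + 1)).mpr (by tauto))
        have hHpar := gale_parity hH x (Or.inl ⟨hxH, hx1H⟩)
        have hfe : (F ∪ {m}).filter (fun y => x < y) =
            (H.filter (fun y => x < y)) ∪ ({m, n - i + 1} : Finset ℕ) := by
          ext z
          simp only [Finset.mem_filter, Finset.mem_union, Finset.mem_insert,
            Finset.mem_singleton, hSmem]
          constructor
          · rintro ⟨rfl | rfl | h | rfl | rfl, h2⟩
            · omega
            · omega
            · tauto
            · tauto
            · tauto
          · rintro (⟨h, h2⟩ | rfl | rfl)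
            · exact ⟨by tauto, h2⟩
            · exact ⟨by tauto, by omega⟩
            · exact ⟨by tauto, by omega⟩
        rw [hfe]
        have hd : Disjoint (H.filter (fun y => x < y)) ({m, n - i + 1} : Finset ℕ) := by
          rw [Finset.disjoint_right]
          intro z hz hzH
          have hzH' := (Finset.mem_filter.mp hzH).1
          rcases Finset.mem_insert.mp hz with rfl | hz2
          · exact hmH hzH'
          · rw [Finset.mem_singleton] at hz2; subst hz2
            have := hHmem _ hzH'; omega
        rw [Finset.card_union_of_disjoint hd,
          Finset.card_insert_of_notMem (by rw [Finset.mem_singleton]; omega),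
          Finset.card_singleton]
        rcases hHpar with ⟨c, hc⟩
        exact ⟨c + 1, by omega⟩
      · -- x = n - i + 1
        subst h0
        have hfe : (F ∪ {m}).filter (fun y => n - i + 1 < y) = ∅ := by
          rw [Finset.filter_eq_empty_iff]
          intro z hz
          rcases (hSmem z).mp hz with rfl | rfl | h | rfl | rfl
          · omega
          · omega
          · have := hHmem z h; omega
          · omega
          · omega
        rw [hfe]
        simp
      · -- x = m : impossible since m + 1 ∈ F ∪ {m}
        exfalso
        apply hx1
        rw [hSmem]
        by_cases hmn : m = n - i
        · right; right; right; left; omega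
        · right; right; left
          have : x + 1 = m + 1 := by omega
          rw [this]
          exact hKF (m + 1) (by omega) (by omega)
  constructor
  · -- F ∪ {m} is a facet of B_A
    constructor
    · -- in the ideal of A
      refine ⟨hSgale, Fset k n i, ⟨i, hi1, hi2, rfl⟩, ?_⟩
      have hd3 : Disjoint (Finset.Icc i (i + 1))
          (Finset.Icc (n - 2 * k + 4 - i) (n - i + 1)) := by
        rw [Finset.disjoint_left]
        intro z hz hz2
        rw [Finset.mem_Icc] at hz hz2
        omega
      have hFsetcard : (Fset k n i).card = 2 * k := by
        rw [Fset, Finset.card_union_of_disjoint hd3, Nat.card_Icc, Nat.card_Icc]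
        omega
      apply lep_of_counts (by rw [hScard, hFsetcard])
      intro t
      set T : Finset ℕ := H ∪ ({m, n - i + 1} : Finset ℕ) with hTdef
      have hTmem : ∀ z, z ∈ T ↔ (z ∈ H ∨ z = m ∨ z = n - i + 1) := by
        intro z
        simp only [hTdef, Finset.mem_union, Finset.mem_insert, Finset.mem_singleton]
      have hST : F ∪ {m} = Finset.Icc i (i + 1) ∪ T := by
        ext z
        rw [Finset.mem_union (s := Finset.Icc i (i + 1)), hSmem, hTmem, Finset.mem_Icc]
        constructor
        · rintro (h | h | h | h | h)
          · left; omega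
          · left; omega
          · right; tauto
          · right; tauto
          · right; tauto
        · rintro (h | h | h | h)
          · by_cases hzi : z = i
            · tauto
            · right; left; omega
          · tauto
          · tauto
          · tauto
      have hdT : Disjoint (Finset.Icc i (i + 1)) T := by
        rw [Finset.disjoint_left]
        intro z hz hz2
        rw [Finset.mem_Icc] at hz
        rw [hTmem] at hz2
        rcases hz2 with h | h | h
        · have := hHmem z h; omega
        · omega
        · omega
      have hTcard : T.card = 2 * k - 2 := by
        have := hScard
        rw [hST, Finset.card_union_of_disjoint hdT, Nat.card_Icc] at this
        omega
      have hTub : ∀ x ∈ T, x ≤ n - i + 1 := by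
        intro x hx
        rw [hTmem] at hx
        rcases hx with h | h | h
        · have := hHmem x h; omega
        · omega
        · omega
      rw [hST, Fset, Finset.filter_union, Finset.filter_union,
        Finset.card_union_of_disjoint (Finset.disjoint_filter_filter hd3),
        Finset.card_union_of_disjoint (Finset.disjoint_filter_filter hdT)]
      apply Nat.add_le_add_left
      exact counts_vs_block (by omega) (by rw [hTcard]; omega) hTub t
    · -- not in the ideal of A - 1
      rintro ⟨-, G', ⟨j, hj2, hjle, rfl⟩, hlep⟩
      obtain ⟨y, hyG, hy2⟩ := lep_exists_ge hlep (Finset.mem_union_left _ htopF)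
      have hyb : y ≤ n - j := by
        rcases Finset.mem_union.mp hyG with h | h <;> rw [Finset.mem_Icc] at h <;> omega
      obtain ⟨z, hzS, hz3⟩ := lep_exists_le hlep
        (Finset.mem_union_left _ (Finset.mem_Icc.mpr ⟨le_refl _, by omega⟩))
      have hzi : i ≤ z := by
        rcases Finset.mem_union.mp hzS with h | h
        · exact hFlb z h
        · rw [Finset.mem_singleton] at h; omega
      omega
  · -- uniqueness
    intro G hBA hFG
    obtain ⟨⟨hGgale, Gj, hAj, hlepG⟩, -⟩ := hBA
    have hGcard : G.card = 2 * k := gale_card hGgale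
    have hGbnd := gale_mem hGgale
    have hsd : (G \ F).card = 1 := by
      rw [Finset.card_sdiff_of_subset hFG, hGcard, hFcard]
      omega
    obtain ⟨x, hx⟩ := Finset.card_eq_one.mp hsd
    have hxG : x ∈ G := (Finset.mem_sdiff.mp (hx ▸ Finset.mem_singleton_self x)).1
    have hxF : x ∉ F := (Finset.mem_sdiff.mp (hx ▸ Finset.mem_singleton_self x)).2
    have hunion : F ∪ {x} = G := by
      rw [← hx]
      exact Finset.union_sdiff_of_subset hFG
    have hGmem : ∀ z, z ∈ G ↔ (z ∈ F ∨ z = x) := by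
      intro z
      rw [← hunion, Finset.mem_union, Finset.mem_singleton]
    suffices hxm : x = m by rw [← hunion, hxm]
    -- x cannot be ≥ n - i + 2
    have hxle : x ≤ n - i := by
      by_contra hc
      push_neg at hc
      have hxne : x ≠ n - i + 1 := fun h => hxF (h ▸ htopF)
      have hx2 : n - i + 2 ≤ x := by omega
      -- first, x must be exactly n - i + 2 by parity
      have hxeq : x = n - i + 2 := by
        by_contra hc2
        have hp := gale_parity hGgale (n - i + 1)
          (Or.inl ⟨hFG htopF, fun hcon => ?_⟩)
        · have hfe : G.filter (fun y => n - i + 1 < y) = {x} := by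
            ext z
            rw [Finset.mem_filter, hGmem, Finset.mem_singleton]
            constructor
            · rintro ⟨h1 | rfl, h2⟩
              · exact absurd (hFub z h1) (by omega)
              · rfl
            · rintro rfl
              exact ⟨Or.inr rfl, by omega⟩
          rw [hfe, Finset.card_singleton] at hp
          simp [Nat.even_iff] at hp
        · rcases (hGmem _).mp hcon with h | h
          · exact absurd (hFub _ h) (by omega)
          · omega
      -- then exclude x = n - i + 2 using membership in the ideal of A
      obtain ⟨j, hj1, hj2', rfl⟩ := hAj
      obtain ⟨y, hyF, hy2⟩ := lep_exists_ge hlepG hxG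
      have hyb : y ≤ n - j + 1 := by
        rcases Finset.mem_union.mp hyF with h | h <;> rw [Finset.mem_Icc] at h <;> omega
      obtain ⟨z, hzG, hz3⟩ := lep_exists_le hlepG
        (Finset.mem_union_left _ (Finset.mem_Icc.mpr ⟨le_refl _, by omega⟩))
      have hzi : i ≤ z := by
        rcases (hGmem z).mp hzG with h | rfl
        · exact hFlb z h
        · omega
      omega
    -- x cannot lie strictly between m and n - i
    rcases lt_trichotomy x m with hlt | heq | hgt
    · -- x < m : parity contradiction
      exfalso
      have hmG : m ∉ G := by
        rw [hGmem]
        rintro (h | h)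
        · exact hmF h
        · omega
      have hne2 : (G.filter (· ≤ m)).Nonempty :=
        ⟨i, Finset.mem_filter.mpr ⟨hFG hiF, by omega⟩⟩
      set y := (G.filter (· ≤ m)).max' hne2 with hydef
      have hyG : y ∈ G := (Finset.mem_filter.mp ((G.filter (· ≤ m)).max'_mem hne2)).1
      have hym : y ≤ m := (Finset.mem_filter.mp ((G.filter (· ≤ m)).max'_mem hne2)).2
      have hymax : ∀ z ∈ G, z ≤ m → z ≤ y := fun z hz h =>
        (G.filter (· ≤ m)).le_max' z (Finset.mem_filter.mpr ⟨hz, h⟩)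
      have hyltm : y < m := lt_of_le_of_ne hym (fun h => hmG (h ▸ hyG))
      have hy1 : y + 1 ∉ G := fun hc => by
        have := hymax (y + 1) hc (by omega)
        omega
      have hp := gale_parity hGgale y (Or.inl ⟨hyG, hy1⟩)
      have hfe : G.filter (fun z => y < z) = Finset.Icc (m + 1) (n - i + 1) := by
        ext z
        rw [Finset.mem_filter, Finset.mem_Icc]
        constructor
        · rintro ⟨hzG, hzy⟩
          have hub : z ≤ n - i + 1 := by
            rcases (hGmem z).mp hzG with h | rfl
            · exact hFub z h
            · omega
          refine ⟨?_, hub⟩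
          by_contra hc
          have := hymax z hzG (by omega)
          omega
        · rintro ⟨h1, h2⟩
          refine ⟨?_, by omega⟩
          rw [hGmem]
          by_cases hz : z ≤ n - i
          · exact Or.inl ((hFmem z).mpr (Or.inr (Or.inr (Or.inl (hKF z (by omega) hz)))))
          · exact Or.inl ((hFmem z).mpr (Or.inr (Or.inr (Or.inr (by omega)))))
      rw [hfe, Nat.card_Icc] at hp
      rw [Nat.even_iff] at hp hHtop
      omega
    · exact heq
    · -- m < x ≤ n - i : then x ∈ H ⊆ F, contradiction
      exact absurd ((hFmem x).mpr (Or.inr (Or.inr (Or.inl (hKF x hgt hxle))))) hxF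
end

section
/- Fix k ≥ 2 and n, and consider the collection A_i of 3-element subsets of [1,n] given by A_i = ∪_{j=1}^{i−1} { {j, j+1, n−j+1}, {j, j+1, n−j−1}, {j+1, n−j, n−j+1}, {j, n−j−1, n−j} }. Then any transversal T̃ of A_i (contained in [1,i] ∪ [n−i, n], with 2i < n − C for suitable constant C) satisfies |T̃| ≥ (2/5)·(2i) − O(1); more precisely |T̃| ≥ (4i − 10)/5. -/
open Finset

/-- The family `𝒜_i` of 3-element subsets of `[1,n]`:
`𝒜_i = ⋃_{j=1}^{i−1} { {j, j+1, n−j+1}, {j, j+1, n−j−1},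
{j+1, n−j, n−j+1}, {j, n−j−1, n−j} }`. -/
def TripleFam (n i : ℕ) : Finset ℕ → Prop := fun F =>
  ∃ j : ℕ, 1 ≤ j ∧ j < i ∧
    (F = {j, j + 1, n - j + 1} ∨ F = {j, j + 1, n - j - 1} ∨
     F = {j + 1, n - j, n - j + 1} ∨ F = {j, n - j - 1, n - j})

lemma hit {T : Finset ℕ} {a b c : ℕ} (h : (T ∩ ({a, b, c} : Finset ℕ)).Nonempty) :
    a ∈ T ∨ b ∈ T ∨ c ∈ T := by
  obtain ⟨x, hx⟩ := h
  simp only [Finset.mem_inter, Finset.mem_insert, Finset.mem_singleton] at hx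
  rcases hx with ⟨hxT, rfl | rfl | rfl⟩ <;> tauto

lemma kernel : ∀ b0 b1 b2 b3 b4 c0 c1 c2 c3 c4 : Bool,
    (b0 || b1 || c1) = true → (b0 || c1 || c0) = true →
    (b1 || b2 || c0) = true → (b1 || b2 || c2) = true →
    (b2 || c1 || c0) = true → (b1 || c2 || c1) = true →
    (b2 || b3 || c1) = true → (b2 || b3 || c3) = true →
    (b3 || c2 || c1) = true → (b2 || c3 || c2) = true →
    (b3 || b4 || c2) = true → (b3 || b4 || c4) = true →
    (b4 || c3 || c2) = true → (b3 || c4 || c3) = true →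
    4 ≤ (if b0 = true then 1 else 0) + ((if b1 = true then 1 else 0) +
      ((if b2 = true then 1 else 0) + ((if b3 = true then 1 else 0) +
      ((if b4 = true then 1 else 0) + ((if c0 = true then 1 else 0) +
      ((if c1 = true then 1 else 0) + ((if c2 = true then 1 else 0) +
      ((if c3 = true then 1 else 0) + (if c4 = true then 1 else 0))))))))) := by
  decide

lemma aux (n : ℕ) : ∀ i : ℕ, 2 * i + 2 < n → ∀ T : Finset ℕ,
    (∀ F : Finset ℕ, TripleFam n i F → (T ∩ F).Nonempty) →
    (4 * (i : ℚ) - 10) / 5 ≤ ((T ∩ (Finset.Icc 1 i ∪ Finset.Icc (n - i) n)).card : ℚ) := by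
  intro i
  induction i using Nat.strong_induction_on with
  | _ i IH =>
    intro hn T htrans
    by_cases hi2 : i ≤ 2
    · -- trivial case
      have h1 : (4 * (i : ℚ) - 10) / 5 ≤ 0 := by
        have : (i : ℚ) ≤ 2 := by exact_mod_cast hi2
        linarith
      have h2 : (0 : ℚ) ≤ ((T ∩ (Finset.Icc 1 i ∪ Finset.Icc (n - i) n)).card : ℚ) := by
        positivity
      linarith
    by_cases hi5 : i ≤ 5
    · -- base case 3 ≤ i ≤ 5 : need card ≥ 2
      have hi3 : 3 ≤ i := by omega
      obtain ⟨x, hx⟩ := htrans {1, 1 + 1, n - 1 + 1} ⟨1, le_refl 1, by omega, Or.inl rfl⟩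
      obtain ⟨y, hy⟩ := htrans {1 + 1, n - 1, n - 1 + 1}
        ⟨1, le_refl 1, by omega, Or.inr (Or.inr (Or.inl rfl))⟩
      obtain ⟨z, hz⟩ := htrans {1, n - 1 - 1, n - 1}
        ⟨1, le_refl 1, by omega, Or.inr (Or.inr (Or.inr rfl))⟩
      simp only [Finset.mem_inter, Finset.mem_insert, Finset.mem_singleton] at hx hy hz
      have hx2 := hx.2
      have hy2 := hy.2
      have hz2 := hz.2
      have hxm : x ∈ T ∩ (Finset.Icc 1 i ∪ Finset.Icc (n - i) n) := by
        refine Finset.mem_inter.mpr ⟨hx.1, ?_⟩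
        simp only [Finset.mem_union, Finset.mem_Icc]
        omega
      have hym : y ∈ T ∩ (Finset.Icc 1 i ∪ Finset.Icc (n - i) n) := by
        refine Finset.mem_inter.mpr ⟨hy.1, ?_⟩
        simp only [Finset.mem_union, Finset.mem_Icc]
        omega
      have hzm : z ∈ T ∩ (Finset.Icc 1 i ∪ Finset.Icc (n - i) n) := by
        refine Finset.mem_inter.mpr ⟨hz.1, ?_⟩
        simp only [Finset.mem_union, Finset.mem_Icc]
        omega
      have hcard : 1 < (T ∩ (Finset.Icc 1 i ∪ Finset.Icc (n - i) n)).card := by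
        rw [Finset.one_lt_card]
        by_cases hxz : x = z
        · exact ⟨x, hxm, y, hym, by omega⟩
        · exact ⟨x, hxm, z, hzm, hxz⟩
      have h2 : (2 : ℚ) ≤ ((T ∩ (Finset.Icc 1 i ∪ Finset.Icc (n - i) n)).card : ℚ) := by
        exact_mod_cast hcard
      have h5 : (i : ℚ) ≤ 5 := by exact_mod_cast hi5
      linarith
    · -- inductive step, i ≥ 6
      have hi6 : 6 ≤ i := by omega
      set g : Finset ℕ := Finset.Icc 1 i ∪ Finset.Icc (n - i) n with hg
      set g5 : Finset ℕ := Finset.Icc 1 (i - 5) ∪ Finset.Icc (n - (i - 5)) n with hg5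
      set S : Finset ℕ := {i - 4, i - 3, i - 2, i - 1, i,
        n - i + 4, n - i + 3, n - i + 2, n - i + 1, n - i} with hS
      -- IH for i - 5
      have hIH : (4 * ((i - 5 : ℕ) : ℚ) - 10) / 5 ≤ ((T ∩ g5).card : ℚ) := by
        refine IH (i - 5) (by omega) (by omega) T ?_
        rintro F ⟨j, hj1, hj2, hj3⟩
        exact htrans F ⟨j, hj1, by omega, hj3⟩
      -- extract the 14 clauses
      have c01 : (i - 4) ∈ T ∨ (i - 4 + 1) ∈ T ∨ (n - (i - 4) - 1) ∈ T :=
        hit (htrans _ ⟨i - 4, by omega, by omega, Or.inr (Or.inl rfl)⟩)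
      have c02 : (i - 4) ∈ T ∨ (n - (i - 4) - 1) ∈ T ∨ (n - (i - 4)) ∈ T :=
        hit (htrans _ ⟨i - 4, by omega, by omega, Or.inr (Or.inr (Or.inr rfl))⟩)
      have c11 : (i - 3) ∈ T ∨ (i - 3 + 1) ∈ T ∨ (n - (i - 3) + 1) ∈ T :=
        hit (htrans _ ⟨i - 3, by omega, by omega, Or.inl rfl⟩)
      have c12 : (i - 3) ∈ T ∨ (i - 3 + 1) ∈ T ∨ (n - (i - 3) - 1) ∈ T :=
        hit (htrans _ ⟨i - 3, by omega, by omega, Or.inr (Or.inl rfl)⟩)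
      have c13 : (i - 3 + 1) ∈ T ∨ (n - (i - 3)) ∈ T ∨ (n - (i - 3) + 1) ∈ T :=
        hit (htrans _ ⟨i - 3, by omega, by omega, Or.inr (Or.inr (Or.inl rfl))⟩)
      have c14 : (i - 3) ∈ T ∨ (n - (i - 3) - 1) ∈ T ∨ (n - (i - 3)) ∈ T :=
        hit (htrans _ ⟨i - 3, by omega, by omega, Or.inr (Or.inr (Or.inr rfl))⟩)
      have c21 : (i - 2) ∈ T ∨ (i - 2 + 1) ∈ T ∨ (n - (i - 2) + 1) ∈ T :=
        hit (htrans _ ⟨i - 2, by omega, by omega, Or.inl rfl⟩)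
      have c22 : (i - 2) ∈ T ∨ (i - 2 + 1) ∈ T ∨ (n - (i - 2) - 1) ∈ T :=
        hit (htrans _ ⟨i - 2, by omega, by omega, Or.inr (Or.inl rfl)⟩)
      have c23 : (i - 2 + 1) ∈ T ∨ (n - (i - 2)) ∈ T ∨ (n - (i - 2) + 1) ∈ T :=
        hit (htrans _ ⟨i - 2, by omega, by omega, Or.inr (Or.inr (Or.inl rfl))⟩)
      have c24 : (i - 2) ∈ T ∨ (n - (i - 2) - 1) ∈ T ∨ (n - (i - 2)) ∈ T :=
        hit (htrans _ ⟨i - 2, by omega, by omega, Or.inr (Or.inr (Or.inr rfl))⟩)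
      have c31 : (i - 1) ∈ T ∨ (i - 1 + 1) ∈ T ∨ (n - (i - 1) + 1) ∈ T :=
        hit (htrans _ ⟨i - 1, by omega, by omega, Or.inl rfl⟩)
      have c32 : (i - 1) ∈ T ∨ (i - 1 + 1) ∈ T ∨ (n - (i - 1) - 1) ∈ T :=
        hit (htrans _ ⟨i - 1, by omega, by omega, Or.inr (Or.inl rfl)⟩)
      have c33 : (i - 1 + 1) ∈ T ∨ (n - (i - 1)) ∈ T ∨ (n - (i - 1) + 1) ∈ T :=
        hit (htrans _ ⟨i - 1, by omega, by omega, Or.inr (Or.inr (Or.inl rfl))⟩)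
      have c34 : (i - 1) ∈ T ∨ (n - (i - 1) - 1) ∈ T ∨ (n - (i - 1)) ∈ T :=
        hit (htrans _ ⟨i - 1, by omega, by omega, Or.inr (Or.inr (Or.inr rfl))⟩)
      -- normalize the numeric values
      rw [show i - 4 + 1 = i - 3 by omega, show n - (i - 4) - 1 = n - i + 3 by omega] at c01
      rw [show n - (i - 4) - 1 = n - i + 3 by omega,
        show n - (i - 4) = n - i + 4 by omega] at c02
      rw [show i - 3 + 1 = i - 2 by omega, show n - (i - 3) + 1 = n - i + 4 by omega] at c11
      rw [show i - 3 + 1 = i - 2 by omega, show n - (i - 3) - 1 = n - i + 2 by omega] at c12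
      rw [show i - 3 + 1 = i - 2 by omega, show n - (i - 3) + 1 = n - i + 4 by omega,
        show n - (i - 3) = n - i + 3 by omega] at c13
      rw [show n - (i - 3) - 1 = n - i + 2 by omega,
        show n - (i - 3) = n - i + 3 by omega] at c14
      rw [show i - 2 + 1 = i - 1 by omega, show n - (i - 2) + 1 = n - i + 3 by omega] at c21
      rw [show i - 2 + 1 = i - 1 by omega, show n - (i - 2) - 1 = n - i + 1 by omega] at c22
      rw [show i - 2 + 1 = i - 1 by omega, show n - (i - 2) + 1 = n - i + 3 by omega,
        show n - (i - 2) = n - i + 2 by omega] at c23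
      rw [show n - (i - 2) - 1 = n - i + 1 by omega,
        show n - (i - 2) = n - i + 2 by omega] at c24
      rw [show i - 1 + 1 = i by omega, show n - (i - 1) + 1 = n - i + 2 by omega] at c31
      rw [show i - 1 + 1 = i by omega, show n - (i - 1) - 1 = n - i by omega] at c32
      rw [show i - 1 + 1 = i by omega, show n - (i - 1) + 1 = n - i + 2 by omega,
        show n - (i - 1) = n - i + 1 by omega] at c33
      rw [show n - (i - 1) - 1 = n - i by omega, show n - (i - 1) = n - i + 1 by omega] at c34
      -- at least 4 elements of T in S
      have hker := kernel (decide ((i - 4) ∈ T)) (decide ((i - 3) ∈ T)) (decide ((i - 2) ∈ T))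
        (decide ((i - 1) ∈ T)) (decide (i ∈ T)) (decide ((n - i + 4) ∈ T))
        (decide ((n - i + 3) ∈ T)) (decide ((n - i + 2) ∈ T)) (decide ((n - i + 1) ∈ T))
        (decide ((n - i) ∈ T))
        (by simpa [or_assoc] using c01) (by simpa [or_assoc] using c02) (by simpa [or_assoc] using c11) (by simpa [or_assoc] using c12)
        (by simpa [or_assoc] using c13) (by simpa [or_assoc] using c14) (by simpa [or_assoc] using c21) (by simpa [or_assoc] using c22)
        (by simpa [or_assoc] using c23) (by simpa [or_assoc] using c24) (by simpa [or_assoc] using c31) (by simpa [or_assoc] using c32)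
        (by simpa [or_assoc] using c33) (by simpa [or_assoc] using c34)
      simp only [decide_eq_true_eq] at hker
      have hScard : 4 ≤ (T ∩ S).card := by
        have hcount : (T ∩ S).card = ∑ x ∈ S, (if x ∈ T then 1 else 0) := by
          rw [Finset.inter_comm, ← Finset.filter_mem_eq_inter, Finset.card_filter]
        rw [hcount, hS]
        rw [Finset.sum_insert (by simp only [Finset.mem_insert, Finset.mem_singleton]; omega),
          Finset.sum_insert (by simp only [Finset.mem_insert, Finset.mem_singleton]; omega),
          Finset.sum_insert (by simp only [Finset.mem_insert, Finset.mem_singleton]; omega),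
          Finset.sum_insert (by simp only [Finset.mem_insert, Finset.mem_singleton]; omega),
          Finset.sum_insert (by simp only [Finset.mem_insert, Finset.mem_singleton]; omega),
          Finset.sum_insert (by simp only [Finset.mem_insert, Finset.mem_singleton]; omega),
          Finset.sum_insert (by simp only [Finset.mem_insert, Finset.mem_singleton]; omega),
          Finset.sum_insert (by simp only [Finset.mem_insert, Finset.mem_singleton]; omega),
          Finset.sum_insert (by simp only [Finset.mem_singleton]; omega),
          Finset.sum_singleton]
        exact hker
      -- combine
      have hdisj : Disjoint (T ∩ g5) (T ∩ S) := by
        rw [Finset.disjoint_left]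
        intro a ha hb
        rw [Finset.mem_inter] at ha hb
        have ha2 := ha.2
        have hb2 := hb.2
        rw [hg5] at ha2
        rw [hS] at hb2
        simp only [Finset.mem_union, Finset.mem_Icc, Finset.mem_insert,
          Finset.mem_singleton] at ha2 hb2
        omega
      have hsub : (T ∩ g5) ∪ (T ∩ S) ⊆ T ∩ g := by
        intro a ha
        rw [Finset.mem_union] at ha
        rw [Finset.mem_inter, hg]
        rcases ha with ha | ha <;> rw [Finset.mem_inter] at ha <;>
          refine ⟨ha.1, ?_⟩ <;> have ha2 := ha.2
        · rw [hg5] at ha2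
          simp only [Finset.mem_union, Finset.mem_Icc] at ha2 ⊢
          omega
        · rw [hS] at ha2
          simp only [Finset.mem_insert, Finset.mem_singleton] at ha2
          simp only [Finset.mem_union, Finset.mem_Icc]
          omega
      have hcards : (T ∩ g5).card + (T ∩ S).card ≤ (T ∩ g).card := by
        rw [← Finset.card_union_of_disjoint hdisj]
        exact Finset.card_le_card hsub
      have hsum : (T ∩ g5).card + 4 ≤ (T ∩ g).card := by omega
      have hsumQ : ((T ∩ g5).card : ℚ) + 4 ≤ ((T ∩ g).card : ℚ) := by exact_mod_cast hsum
      rw [Nat.cast_sub (show 5 ≤ i by omega)] at hIH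
      push_cast at hIH
      linarith

/-- any transversal `T̃ ⊆ [1,i] ∪ [n−i, n]` of the family `𝒜_i`
(with `n > 2i + 2`) satisfies `|T̃| ≥ (2/5)·(2i) − O(1)`; more precisely
`|T̃| ≥ (4i − 10)/5`. -/
theorem stmt13 (k n i : ℕ) (hk : 2 ≤ k) (hn : 2 * i + 2 < n)
    (T : Finset ℕ) (hT : T ⊆ Finset.Icc 1 i ∪ Finset.Icc (n - i) n)
    (htrans : ∀ F : Finset ℕ, TripleFam n i F → (T ∩ F).Nonempty) :
    (4 * (i : ℚ) - 10) / 5 ≤ (T.card : ℚ) := by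
  have h := aux n i hn T htrans
  rwa [Finset.inter_eq_left.mpr hT] at h
end

section
/- For the cs simplicial 3-sphere Δ³_n on vertex set {±1,...,±n} (from the Jockusch/Novik–Zheng construction), the set T = ({±1, ±3, ±5, ...} ∩ V_n) ∪ {±n} is a transversal of the hypergraph of facets of Δ³_n, where the facets of Δ³_n are exactly the sets of the forms: {i, i+1, j, j+1}, {i, i+1, −j, −(j+1)} (appropriately signed 4-sets per the complete facet list of Corollary 3.2 of Novik–Zheng). Consequently τ(H(Δ³_n)) ≤ n + O(1) and lim_{n→∞} μ(Δ³_n) ≤ 1/2. -/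
open Finset

lemma odd_abs_iff' (x : ℤ) : Odd |x| ↔ x.natAbs % 2 = 1 := by
  rw [Int.abs_eq_natAbs, Int.odd_coe_nat, Nat.odd_iff]

lemma filter_eq' (n : ℕ) :
    ((Finset.Icc (-(n : ℤ)) (n : ℤ)).erase 0).filter (fun v => Odd |v|) =
      (Finset.range ((n+1)/2)).image (fun k : ℕ => (2*(k:ℤ)+1)) ∪
      (Finset.range ((n+1)/2)).image (fun k : ℕ => (-(2*(k:ℤ)+1))) := by
  ext x
  simp only [mem_filter, mem_erase, mem_Icc, mem_union, mem_image, mem_range, odd_abs_iff']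
  constructor
  · rintro ⟨⟨hx0, hl, hr⟩, hodd⟩
    rcases lt_or_gt_of_ne hx0 with h | h
    · right; exact ⟨(x.natAbs - 1)/2, by omega, by omega⟩
    · left; exact ⟨(x.natAbs - 1)/2, by omega, by omega⟩
  · rintro (⟨k, hk, rfl⟩ | ⟨k, hk, rfl⟩) <;> refine ⟨⟨by omega, by omega, by omega⟩, by omega⟩

lemma filter_card' (n : ℕ) :
    (((Finset.Icc (-(n : ℤ)) (n : ℤ)).erase 0).filter (fun v => Odd |v|)).card =
      2 * ((n+1)/2) := by
  rw [filter_eq', card_union_of_disjoint,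
    card_image_of_injective _ (by intro a b h; dsimp at h; omega),
    card_image_of_injective _ (by intro a b h; dsimp at h; omega), card_range]
  · ring
  · rw [disjoint_left]
    rintro x hx hy
    simp only [mem_image, mem_range] at hx hy
    obtain ⟨k, _, rfl⟩ := hx
    obtain ⟨m, _, hm⟩ := hy
    omega

lemma mem_T_of (n : ℕ) (x : ℤ) (h1 : 1 ≤ |x|) (h2 : |x| ≤ n) (h3 : Odd |x|) :
    x ∈ ((Finset.Icc (-(n : ℤ)) (n : ℤ)).erase 0).filter (fun v => Odd |v|)
        ∪ {(n : ℤ), -(n : ℤ)} := by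
  have habs : |x| = (x.natAbs : ℤ) := Int.abs_eq_natAbs x
  rw [habs] at h1 h2
  refine mem_union_left _ (mem_filter.mpr ⟨mem_erase.mpr ⟨?_, mem_Icc.mpr ⟨?_, ?_⟩⟩, h3⟩)
  all_goals omega

/-- let `Facets` be the set of facets of the cs simplicial
3-sphere `Δ³_n` on the vertex set `V_n = {±1, …, ±n}`. Per the complete facet
list (Corollary 3.2 of Novik–Zheng), every facet is a 4-subset of `V_n`
containing a pair of consecutive integers `{j, j+1}` or `{−j, −(j+1)}`
(`1 ≤ j < n`), or containing `n` or `−n`. Then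
`T = ({±1, ±3, ±5, …} ∩ V_n) ∪ {±n}` is a transversal of the hypergraph of
facets of `Δ³_n`, and `|T| ≤ n + 2`, so `τ(H(Δ³_n)) ≤ n + O(1)` and
`lim_{n→∞} μ(Δ³_n) ≤ 1/2`. -/
theorem stmt18 (n : ℕ) (hn : 2 ≤ n) (Facets : Finset (Finset ℤ))
    (hfacets : ∀ F ∈ Facets,
      F ⊆ (Finset.Icc (-(n : ℤ)) (n : ℤ)).erase 0 ∧ F.card = 4 ∧
      ((∃ j : ℤ, 1 ≤ j ∧ j + 1 ≤ (n : ℤ) ∧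
          (({j, j + 1} : Finset ℤ) ⊆ F ∨ ({-j, -(j + 1)} : Finset ℤ) ⊆ F)) ∨
        (n : ℤ) ∈ F ∨ -(n : ℤ) ∈ F)) :
    (∀ F ∈ Facets,
      ((((Finset.Icc (-(n : ℤ)) (n : ℤ)).erase 0).filter (fun v => Odd |v|)
          ∪ {(n : ℤ), -(n : ℤ)}) ∩ F).Nonempty) ∧
    (((Finset.Icc (-(n : ℤ)) (n : ℤ)).erase 0).filter (fun v => Odd |v|)
        ∪ {(n : ℤ), -(n : ℤ)}).card ≤ n + 2 := by
  constructor
  · intro F hF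
    obtain ⟨-, -, (⟨j, hj1, hjn, hpair | hpair⟩ | hnF | hnF)⟩ := hfacets F hF
    · rcases Int.even_or_odd j with he | ho
      · refine ⟨j + 1, mem_inter.mpr ⟨mem_T_of n _ ?_ ?_ ?_, hpair (by simp)⟩⟩
        · rw [abs_of_pos (by omega)]; omega
        · rw [abs_of_pos (by omega)]; omega
        · rw [abs_of_pos (by omega)]; exact Even.add_one he
      · refine ⟨j, mem_inter.mpr ⟨mem_T_of n _ ?_ ?_ ?_, hpair (by simp)⟩⟩
        · rw [abs_of_pos (by omega)]; omega
        · rw [abs_of_pos (by omega)]; omega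
        · rw [abs_of_pos (by omega)]; exact ho
    · rcases Int.even_or_odd j with he | ho
      · refine ⟨-(j + 1), mem_inter.mpr ⟨mem_T_of n _ ?_ ?_ ?_, hpair (by simp)⟩⟩
        · rw [abs_neg, abs_of_pos (by omega)]; omega
        · rw [abs_neg, abs_of_pos (by omega)]; omega
        · rw [abs_neg, abs_of_pos (by omega)]; exact Even.add_one he
      · refine ⟨-j, mem_inter.mpr ⟨mem_T_of n _ ?_ ?_ ?_, hpair (by simp)⟩⟩
        · rw [abs_neg, abs_of_pos (by omega)]; omega
        · rw [abs_neg, abs_of_pos (by omega)]; omega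
        · rw [abs_neg, abs_of_pos (by omega)]; exact ho
    · exact ⟨(n : ℤ), mem_inter.mpr ⟨mem_union_right _ (by simp), hnF⟩⟩
    · exact ⟨-(n : ℤ), mem_inter.mpr ⟨mem_union_right _ (by simp), hnF⟩⟩
  · rcases Nat.even_or_odd n with he | ho
    · refine (card_union_le _ _).trans ?_
      have h2 : ({(n : ℤ), -(n : ℤ)} : Finset ℤ).card ≤ 2 :=
        (card_insert_le _ _).trans (by simp)
      rw [filter_card']
      obtain ⟨m, rfl⟩ := he
      omega
    · have hsub : ({(n : ℤ), -(n : ℤ)} : Finset ℤ) ⊆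
          ((Finset.Icc (-(n : ℤ)) (n : ℤ)).erase 0).filter (fun v => Odd |v|) := by
        rw [Nat.odd_iff] at ho
        intro x hx
        simp only [mem_insert, mem_singleton] at hx
        rcases hx with rfl | rfl <;>
          refine mem_filter.mpr ⟨mem_erase.mpr ⟨by omega, mem_Icc.mpr ⟨by omega, by omega⟩⟩,
            by rw [odd_abs_iff']; omega⟩
      rw [union_eq_left.mpr hsub, filter_card']
      omega
end
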